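/- Let q be a prime power and let m, s, t, w′ be positive integers with t < m. Suppose q ≤ ∑_{i=0}^{w′} C(s, i) and m ≤ q + 1. Then there exists an (ms, t, mw′)-low-power cooling (LPC) code of size q^{m−t}. -/

import Mathlib

/-- An `(n,t,w)`-low-power cooling code of size `M`: `M` pairwise disjoint subsets of
`F_2^n`, every vector in every codeset has Hamming weight at most `w`, and for every
`t`-subset `S` of coordinates and every codeset, some vector in the codeset has
support disjoint from `S`. -/
def IsLPCCode (n t w M : ℕ) (C : Fin M → Set (Fin n → ZMod 2)) : Prop :=
  (∀ i j : Fin M, i ≠ j → Disjoint (C i) (C j)) ∧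
  (∀ i : Fin M, ∀ x ∈ C i, hammingNorm x ≤ w) ∧
  ∀ S : Finset (Fin n), S.card = t → ∀ i : Fin M,
    ∃ x ∈ C i, ∀ j ∈ S, x j = 0

section LPCAux
open Finset Polynomial



def wtEquiv (s : ℕ) : (Fin s → ZMod 2) ≃ Finset (Fin s) where
  toFun y := Finset.univ.filter (fun j => y j ≠ 0)
  invFun A := fun j => if j ∈ A then 1 else 0
  left_inv y := by
    funext j
    have h2 : ∀ a : ZMod 2, a ≠ 0 → a = 1 := by decide
    by_cases h : y j = 0
    · simp [h]
    · simp [h, h2 _ h]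
  right_inv A := by ext j; simp

lemma wtEquiv_card (s : ℕ) (y : Fin s → ZMod 2) : hammingNorm y = (wtEquiv s y).card := rfl

lemma ball_card (s w' : ℕ) :
    Fintype.card {y : Fin s → ZMod 2 // hammingNorm y ≤ w'} =
      ∑ i ∈ Finset.range (w' + 1), s.choose i := by
  classical
  rw [Fintype.card_congr ((wtEquiv s).subtypeEquiv
    (q := fun A => A.card ≤ w') (fun y => by rw [wtEquiv_card]))]
  rw [Fintype.card_subtype]
  have h : (Finset.univ.filter fun A : Finset (Fin s) => A.card ≤ w')
      = (Finset.range (w'+1)).biUnion (fun i => Finset.powersetCard i Finset.univ) := by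
    ext A
    simp only [mem_filter, mem_univ, true_and, mem_biUnion, mem_range,
      Finset.mem_powersetCard_univ, Nat.lt_succ_iff]
    constructor
    · exact fun h => ⟨A.card, h, rfl⟩
    · rintro ⟨i, hi, rfl⟩; exact hi
  rw [h, Finset.card_biUnion]
  · refine Finset.sum_congr rfl fun i _ => ?_
    rw [Finset.card_powersetCard, card_univ, Fintype.card_fin]
  · intro i _ j _ hij
    rw [Function.onFun, Finset.disjoint_left]
    intro A hA hA'
    rw [Finset.mem_powersetCard_univ] at hA hA'
    exact hij (hA ▸ hA')


lemma vand_inj {K : Type*} [Field K] {m t : ℕ} (ht : 0 < t)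
    (ι : Fin (m-1) ↪ K)
    (col : Fin m → Fin t → K)
    (hcol1 : ∀ (j : Fin m) (h : (j:ℕ) < m - 1), col j = fun k : Fin t => (ι ⟨j, h⟩)^(k:ℕ))
    (hcol2 : ∀ j : Fin m, ¬((j:ℕ) < m - 1) → col j = fun k : Fin t => if (k:ℕ) = t - 1 then (1:K) else 0)
    (S : Finset (Fin m)) (hS : S.card = t)
    (c : Fin t → K) (hc : ∀ j ∈ S, ∑ k, col j k * c k = 0) : c = 0 := by
  classical
  set p : K[X] := ∑ k : Fin t, C (c k) * X^(k:ℕ) with hp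
  have hcoeff : ∀ k : Fin t, p.coeff (k:ℕ) = c k := by
    intro k
    rw [hp, finset_sum_coeff]
    have : ∀ i : Fin t, (C (c i) * X^(i:ℕ)).coeff (k:ℕ) = if i = k then c i else 0 := by
      intro i
      rw [coeff_C_mul, coeff_X_pow]
      by_cases h : i = k
      · simp [h]
      · have hne : ¬((i:ℕ) = (k:ℕ)) := fun hh => h (Fin.ext hh)
        rw [if_neg (fun hh => hne hh.symm), if_neg h, mul_zero]
    simp only [this]
    simp
  have hdeg : p.natDegree ≤ t - 1 := by
    apply natDegree_sum_le_of_forall_le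
    intro i _
    exact (natDegree_C_mul_X_pow_le (c i) (i:ℕ)).trans (Nat.le_sub_one_of_lt i.2)
  have heval : ∀ x : K, p.eval x = ∑ k : Fin t, c k * x^(k:ℕ) := by
    intro x; rw [hp, eval_finset_sum]; simp
  -- the "finite" part of S
  have hroots : ∀ j ∈ S, (h : (j:ℕ) < m - 1) → p.eval (ι ⟨j, h⟩) = 0 := by
    intro j hj h
    rw [heval]
    have := hc j hj
    rw [hcol1 j h] at this
    rw [← this]
    exact Finset.sum_congr rfl fun k _ => mul_comm _ _
  have hp0 : p = 0 := by
    by_cases hall : ∀ j ∈ S, (j:ℕ) < m - 1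
    · -- t distinct roots
      set S' := S.attach
      have hcard : Fintype.card {j // j ∈ S} = t := by rw [Fintype.card_coe, hS]
      refine eq_zero_of_natDegree_lt_card_of_eval_eq_zero p
        (f := fun j : {j // j ∈ S} => ι ⟨j.1, hall j.1 j.2⟩) ?_ ?_ ?_
      · intro a b hab
        have h2 : ((a.1 : Fin m) : ℕ) = ((b.1 : Fin m) : ℕ) := by
          simpa using congrArg Fin.val (ι.injective hab)
        exact Subtype.ext (Fin.ext h2)
      · exact fun j => hroots j.1 j.2 (hall j.1 j.2)
      · rw [hcard]; exact lt_of_le_of_lt hdeg (Nat.sub_lt ht Nat.one_pos)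
    · push_neg at hall
      obtain ⟨j0, hj0S, hj0⟩ := hall
      -- leading coefficient vanishes
      have hclead : c ⟨t-1, Nat.sub_lt ht Nat.one_pos⟩ = 0 := by
        have := hc j0 hj0S
        rw [hcol2 j0 (not_lt.mpr hj0)] at this
        rw [Finset.sum_eq_single (⟨t-1, Nat.sub_lt ht Nat.one_pos⟩ : Fin t)] at this
        · simpa using this
        · intro k _ hk
          have : (k:ℕ) ≠ t - 1 := fun hh => hk (Fin.ext hh)
          simp [this]
        · simp
      have hcoefflead : p.coeff (t-1) = 0 := by
        rw [show (t-1 : ℕ) = ((⟨t-1, Nat.sub_lt ht Nat.one_pos⟩ : Fin t) : ℕ) from rfl,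
          hcoeff, hclead]
      by_contra hpne
      have hdeg' : p.natDegree < t - 1 := by
        rcases lt_or_eq_of_le hdeg with h | h
        · exact h
        · exfalso
          exact hpne (leadingCoeff_eq_zero.mp (by rw [leadingCoeff, h, hcoefflead]))
      -- S.erase j0 : all < m-1
      have hrest : ∀ j ∈ S.erase j0, (j:ℕ) < m - 1 := by
        intro j hj
        by_contra h
        have hjm : (j:ℕ) = m - 1 := le_antisymm (Nat.le_sub_one_of_lt j.2) (not_lt.mp h)
        have hj0m : (j0:ℕ) = m - 1 := le_antisymm (Nat.le_sub_one_of_lt j0.2) hj0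
        exact (Finset.mem_erase.mp hj).1 (Fin.ext (hjm.trans hj0m.symm))
      apply hpne
      refine eq_zero_of_natDegree_lt_card_of_eval_eq_zero p
        (f := fun j : {j // j ∈ S.erase j0} => ι ⟨j.1, hrest j.1 j.2⟩) ?_ ?_ ?_
      · intro a b hab
        have h2 : ((a.1 : Fin m) : ℕ) = ((b.1 : Fin m) : ℕ) := by
          simpa using congrArg Fin.val (ι.injective hab)
        exact Subtype.ext (Fin.ext h2)
      · exact fun j => hroots j.1 (Finset.mem_of_mem_erase j.2) (hrest j.1 j.2)
      · rw [Fintype.card_coe, Finset.card_erase_of_mem hj0S, hS]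
        exact hdeg'
  funext k
  rw [← hcoeff k, hp0]
  simp


end LPCAux

theorem stmt_18 (q m s t w' : ℕ) (hq : IsPrimePow q)
    (ht : 0 < t) (htm : t < m) (hs : 0 < s) (hw : 0 < w')
    (hqs : q ≤ ∑ i ∈ Finset.range (w' + 1), s.choose i) (hm : m ≤ q + 1) :
    ∃ D : Fin (q ^ (m - t)) → Set (Fin (m * s) → ZMod 2),
      IsLPCCode (m * s) t (m * w') (q ^ (m - t)) D := by
  classical
  obtain ⟨pp, n, hpp, hn, hq'⟩ := hq
  haveI : Fact pp.Prime := ⟨Nat.prime_iff.mpr hpp⟩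
  set K := GaloisField pp n with hK
  haveI : Fintype K := Fintype.ofFinite K
  have cardK : Fintype.card K = q := by
    rw [← Nat.card_eq_fintype_card, hK, GaloisField.card pp n hn.ne', hq']
  have hqpos : 0 < q := by rw [← hq']; exact pow_pos (Nat.prime_iff.mpr hpp).pos n
  -- evaluation points
  obtain ⟨ι⟩ : Nonempty (Fin (m-1) ↪ K) :=
    Function.Embedding.nonempty_of_card_le (by rw [Fintype.card_fin, cardK]; omega)
  -- the symbol map φ
  have hball : Fintype.card K ≤ Fintype.card {y : Fin s → ZMod 2 // hammingNorm y ≤ w'} := by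
    rw [cardK, ball_card]; exact hqs
  obtain ⟨emb⟩ := Function.Embedding.nonempty_of_card_le hball
  set z : {y : Fin s → ZMod 2 // hammingNorm y ≤ w'} := ⟨0, by simp⟩ with hz
  set φ : K → (Fin s → ZMod 2) := fun a => ((Equiv.swap (emb 0) z) (emb a) : _) with hφ
  have hφinj : Function.Injective φ := fun a b hab =>
    emb.injective ((Equiv.swap (emb 0) z).injective (Subtype.ext hab))
  have hφ0 : φ 0 = 0 := by
    rw [hφ]; simp only [Equiv.swap_apply_left]; rfl
  have hφw : ∀ a, hammingNorm (φ a) ≤ w' := fun a => ((Equiv.swap (emb 0) z) (emb a)).2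
  -- the generator matrix columns
  set col : Fin m → Fin t → K := fun j =>
    if h : (j:ℕ) < m - 1 then fun k => (ι ⟨j, h⟩)^(k:ℕ)
    else fun k => if (k:ℕ) = t - 1 then 1 else 0 with hcol
  have hcol1 : ∀ (j : Fin m) (h : (j:ℕ) < m - 1), col j = fun k : Fin t => (ι ⟨j, h⟩)^(k:ℕ) :=
    fun j h => by rw [hcol]; exact dif_pos h
  have hcol2 : ∀ j : Fin m, ¬((j:ℕ) < m - 1) →
      col j = fun k : Fin t => if (k:ℕ) = t - 1 then (1:K) else 0 :=
    fun j h => by rw [hcol]; exact dif_neg h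
  set M : Matrix (Fin m) (Fin t) K := Matrix.of col with hM
  set T : (Fin t → K) →ₗ[K] (Fin m → K) := M.mulVecLin with hT0
  have hT : ∀ c j, T c j = ∑ k, col j k * c k := by
    intro c j
    rw [hT0]
    simp [Matrix.mulVecLin_apply, Matrix.mulVec, dotProduct, hM]
  have hker : ∀ (S : Finset (Fin m)), S.card = t → ∀ c : Fin t → K,
      (∀ j ∈ S, T c j = 0) → c = 0 := by
    intro S hSc c hc
    apply vand_inj ht ι col hcol1 hcol2 S hSc
    intro j hj
    rw [← hT]; exact hc j hj
  -- surjectivity onto any t coordinates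
  have hsurj : ∀ S : Finset (Fin m), S.card = t → ∀ target : Fin m → K,
      ∃ c : Fin t → K, ∀ j ∈ S, T c j = target j := by
    intro S hScard target
    set F : (Fin t → K) → ({j // j ∈ S} → K) := fun c j => T c j.1 with hF
    have hFinj : Function.Injective F := by
      intro a b hab
      have h0 : a - b = 0 := by
        apply hker S hScard
        intro j hj
        rw [map_sub]
        have h1 : T a j = T b j := congrFun hab ⟨j, hj⟩
        simp [h1]
      exact sub_eq_zero.mp h0
    have hFbij : Function.Bijective F :=
      (Fintype.bijective_iff_injective_and_card F).mpr ⟨hFinj, by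
        rw [Fintype.card_fun, Fintype.card_fun, Fintype.card_coe, hScard, Fintype.card_fin]⟩
    obtain ⟨c, hcF⟩ := hFbij.2 (fun j => target j.1)
    exact ⟨c, fun j hj => congrFun hcF ⟨j, hj⟩⟩
  -- T injective
  obtain ⟨S0, -, hS0⟩ := Finset.exists_subset_card_eq (s := (Finset.univ : Finset (Fin m))) (n := t)
    (by rw [Finset.card_univ, Fintype.card_fin]; omega)
  have hTinj : Function.Injective T := by
    intro a b hab
    have h0 : a - b = 0 := by
      apply hker S0 hS0
      intro j hj
      rw [map_sub, Pi.sub_apply, congrFun hab j, sub_self]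
    exact sub_eq_zero.mp h0
  -- quotient
  set Csub := LinearMap.range T with hCsub
  have hcardQ : Fintype.card ((Fin m → K) ⧸ Csub) = q ^ (m - t) := by
    have h1 := Submodule.card_eq_card_quotient_mul_card Csub
    have h2 : Nat.card (Fin m → K) = q ^ m := by
      rw [Nat.card_eq_fintype_card, Fintype.card_fun, cardK, Fintype.card_fin]
    have h3 : Nat.card Csub = q ^ t := by
      have e1 : Nat.card Csub = Nat.card (Set.range ⇑T) :=
        Nat.card_congr (Equiv.setCongr (LinearMap.coe_range T))
      rw [e1, Nat.card_range_of_injective hTinj, Nat.card_eq_fintype_card,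
        Fintype.card_fun, cardK, Fintype.card_fin]
    rw [h2, h3] at h1
    rw [← Nat.card_eq_fintype_card]
    have h4 : q ^ t * q ^ (m - t) = q ^ t * Nat.card ((Fin m → K) ⧸ Csub) := by
      rw [← h1, ← pow_add]
      congr 1
      omega
    exact (Nat.eq_of_mul_eq_mul_left (pow_pos hqpos t) h4).symm
  set eQ : ((Fin m → K) ⧸ Csub) ≃ Fin (q ^ (m - t)) := Fintype.equivFinOfCardEq hcardQ with heQ
  -- block map
  set pr : Fin m × Fin s ≃ Fin (m * s) := finProdFinEquiv with hpr
  set Φ : (Fin m → K) → (Fin (m*s) → ZMod 2) :=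
    fun v idx => φ (v (pr.symm idx).1) (pr.symm idx).2 with hΦ
  have hΦinj : Function.Injective Φ := by
    intro a b hab
    funext j
    apply hφinj
    funext k
    have h1 := congrFun hab (pr (j, k))
    simpa [hΦ, Equiv.symm_apply_apply] using h1
  have hΦnorm : ∀ v, hammingNorm (Φ v) ≤ m * w' := by
    intro v
    have e1 : {idx : Fin (m*s) // Φ v idx ≠ 0} ≃ {p : Fin m × Fin s // φ (v p.1) p.2 ≠ 0} :=
      (pr.subtypeEquiv (fun p => by rw [hΦ]; simp [Equiv.symm_apply_apply])).symm
    have e2 : {p : Fin m × Fin s // φ (v p.1) p.2 ≠ 0} ≃ Σ j : Fin m, {k // φ (v j) k ≠ 0} :=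
      Equiv.subtypeProdEquivSigmaSubtype (fun (j : Fin m) (k : Fin s) => φ (v j) k ≠ 0)
    calc hammingNorm (Φ v) = Fintype.card {idx // Φ v idx ≠ 0} :=
          (Fintype.card_subtype _).symm
      _ = Fintype.card (Σ j : Fin m, {k // φ (v j) k ≠ 0}) :=
          Fintype.card_congr (e1.trans e2)
      _ = ∑ j : Fin m, Fintype.card {k // φ (v j) k ≠ 0} := Fintype.card_sigma
      _ = ∑ j : Fin m, hammingNorm (φ (v j)) := by
          refine Finset.sum_congr rfl fun j _ => ?_
          rw [Fintype.card_subtype]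
          rfl
      _ ≤ ∑ _j : Fin m, w' := Finset.sum_le_sum fun j _ => hφw (v j)
      _ = m * w' := by rw [Finset.sum_const, Finset.card_univ, Fintype.card_fin, smul_eq_mul]
  -- the code
  refine ⟨fun i => Φ '' {v | Submodule.Quotient.mk v = eQ.symm i}, ?_, ?_, ?_⟩
  · intro i j hij
    rw [Set.disjoint_left]
    rintro x ⟨v, hv, rfl⟩ ⟨v', hv', hvv'⟩
    have h1 : v' = v := hΦinj hvv'
    apply hij
    apply eQ.symm.injective
    rw [← hv, ← hv', h1]
  · rintro i x ⟨v, -, rfl⟩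
    exact hΦnorm v
  · intro S hScard i
    set B := S.image (fun idx => (pr.symm idx).1) with hB
    have hBcard : B.card ≤ t := le_trans Finset.card_image_le hScard.le
    obtain ⟨B', hBB', -, hB'card⟩ := Finset.exists_subsuperset_card_eq
      (Finset.subset_univ B) hBcard (by rw [Finset.card_univ, Fintype.card_fin]; omega)
    obtain ⟨v0, hv0⟩ := Submodule.Quotient.mk_surjective Csub (eQ.symm i)
    obtain ⟨c, hc⟩ := hsurj B' hB'card (fun j => - v0 j)
    refine ⟨Φ (v0 + T c), ⟨v0 + T c, ?_, rfl⟩, ?_⟩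
    · rw [← hv0]
      refine (Submodule.Quotient.eq Csub).mpr ?_
      rw [add_sub_cancel_left]
      exact LinearMap.mem_range_self T c
    · intro j hj
      have hblock : (pr.symm j).1 ∈ B' := hBB' (Finset.mem_image_of_mem _ hj)
      have hx0 : (v0 + T c) (pr.symm j).1 = 0 := by
        rw [Pi.add_apply, hc _ hblock]
        ring
      rw [hΦ]
      simp only [hx0, hφ0]
      rfl
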